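/- Let Π = (δ, Σ, 𝒞) be an LCL problem for δ-regular rooted trees. Then there exists a positive integer γ with the following property: for every subset Σ̃ ⊆ Σ and every label σ ∈ Σ̃ \ trim(Σ̃), there is no correct labeling of T_γ whose root has label σ and all of whose labels lie in Σ̃. -/
import Mathlib


/-- `rOk 𝒞 S i σ`: there is a correct labeling of the complete rooted tree `T_i`
whose root has label `σ` and all of whose labels lie in `S` (every node with
children must use a node configuration from `𝒞`). -/
def rOk {L : Type} (C : Set (L × Multiset L)) (S : Set L) : ℕ → L → Prop
  | 0, σ => σ ∈ S
  | i + 1, σ => σ ∈ S ∧ ∃ m : Multiset L, (σ, m) ∈ C ∧ ∀ a ∈ m, rOk C S i a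

/-- `trim(Σ̃)` for rooted trees: labels `σ ∈ S` such that for every `i ≥ 1` there is
a correct labeling of `T_i` with root label `σ` and all labels in `S`. -/
def trimR {L : Type} (C : Set (L × Multiset L)) (S : Set L) : Set L :=
  {σ | σ ∈ S ∧ ∀ i : ℕ, 1 ≤ i → rOk C S i σ}

lemma rOk_anti {L : Type} (C : Set (L × Multiset L)) (S : Set L) :
    ∀ i σ, rOk C S (i + 1) σ → rOk C S i σ
  | 0, σ, h => h.1
  | i + 1, σ, h => by
    obtain ⟨hs, m, hm, ha⟩ := h
    exact ⟨hs, m, hm, fun a am => rOk_anti C S i a (ha a am)⟩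

lemma rOk_le {L : Type} (C : Set (L × Multiset L)) (S : Set L) {i j : ℕ} (hij : i ≤ j)
    {σ} (h : rOk C S j σ) : rOk C S i σ := by
  induction j with
  | zero => exact Nat.le_zero.mp hij ▸ h
  | succ j ih =>
    rcases Nat.lt_or_ge i (j+1) with hl | hg
    · exact ih (by omega) (rOk_anti C S j σ h)
    · have : i = j + 1 := le_antisymm hij hg
      exact this ▸ h

lemma rOk_stab {L : Type} (C : Set (L × Multiset L)) (S : Set L) {k : ℕ}
    (hk : ∀ σ, rOk C S k σ → rOk C S (k + 1) σ) :
    ∀ j, k ≤ j → ∀ σ, rOk C S j σ → rOk C S (j + 1) σ := by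
  intro j hj
  induction j with
  | zero =>
    have : k = 0 := Nat.le_zero.mp hj
    exact this ▸ hk
  | succ j ih =>
    rcases Nat.lt_or_ge k (j+1) with hl | hg
    · intro σ h
      obtain ⟨hs, m, hm, ha⟩ := h
      exact ⟨hs, m, hm, fun a am => ih (by omega) a (ha a am)⟩
    · have : k = j + 1 := le_antisymm hj hg
      exact this ▸ hk

lemma exists_stab {L : Type} [Fintype L] (C : Set (L × Multiset L)) (S : Set L) :
    ∃ k ≤ Fintype.card L, ∀ σ, rOk C S k σ → rOk C S (k + 1) σ := by
  classical
  by_contra hcon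
  push_neg at hcon
  set f : ℕ → Finset L := fun k => Finset.univ.filter (fun σ => rOk C S k σ) with hf
  have hsub : ∀ k, f (k + 1) ⊆ f k := by
    intro k σ hσ
    simp only [hf, Finset.mem_filter] at *
    exact ⟨hσ.1, rOk_anti C S k σ hσ.2⟩
  have hstrict : ∀ k ≤ Fintype.card L, f (k + 1) ⊂ f k := by
    intro k hk
    obtain ⟨σ, h1, h2⟩ := hcon k hk
    refine Finset.ssubset_iff_of_subset (hsub k) |>.mpr ⟨σ, ?_, ?_⟩ <;>
      simp [hf, h1, h2]
  have hcard : ∀ k ≤ Fintype.card L + 1, (f k).card + k ≤ (f 0).card := by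
    intro k hk
    induction k with
    | zero => simp
    | succ k ih =>
      have h1 := ih (by omega)
      have h2 : (f (k+1)).card < (f k).card :=
        Finset.card_lt_card (hstrict k (by omega))
      omega
  have h0 : (f 0).card ≤ Fintype.card L := Finset.card_le_univ _
  have := hcard (Fintype.card L + 1) le_rfl
  omega


/-- A uniform witness height `γ` for non-membership in `trim`,
rooted trees. -/
theorem stmt11 {L : Type} [Fintype L] [DecidableEq L]
    (δ : ℕ) (hδ : 1 ≤ δ) (C : Set (L × Multiset L))
    (hC : ∀ c ∈ C, Multiset.card c.2 = δ) :
    ∃ γ : ℕ, 1 ≤ γ ∧ ∀ St : Set L, ∀ σ ∈ St, σ ∉ trimR C St → ¬ rOk C St γ σ := by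
  refine ⟨Fintype.card L + 1, by omega, ?_⟩
  intro St σ hσ htrim hok
  apply htrim
  refine ⟨hσ, fun i hi => ?_⟩
  obtain ⟨k, hk, hstab⟩ := exists_stab C St
  rcases le_or_gt i (Fintype.card L + 1) with hle | hlt
  · exact rOk_le C St hle hok
  · -- i > γ; use stabilization
    have hγk : k ≤ Fintype.card L + 1 := by omega
    have hall : ∀ j, k ≤ j → rOk C St j σ → rOk C St (j + 1) σ :=
      fun j hj => rOk_stab C St hstab j hj σ
    have hkok : rOk C St k σ := rOk_le C St hγk hok
    have : ∀ j, rOk C St (k + j) σ := by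
      intro j
      induction j with
      | zero => exact hkok
      | succ j ih => exact hall (k + j) (by omega) ih
    have := this (i - k)
    rwa [Nat.add_sub_cancel' (by omega)] at this
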